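/- One-period duality for the lower price: under the assumptions of the previous statement, the lower price π̲ = sup{x ∈ ℝ : ∃ γ ∈ ℝ^d, x − ⟨γ, S_1 − S_0⟩ ≤ f a.s.} equals inf{y : (S_0, y) ∈ ri(conv{(S_1(ω), f(ω)) : ω ∈ Ω})}, and moreover π̲ ≤ π̄ with the set of arbitrage-free prices of f equal to {y : (S_0, y) ∈ ri(conv{(S_1(ω), f(ω))})}. -/

import Mathlib

open Finset Pointwise RealInnerProductSpace

noncomputable section

abbrev E (d : ℕ) : Type := EuclideanSpace ℝ (Fin d)

variable {V : Type*} [NormedAddCommGroup V] [NormedSpace ℝ V]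

lemma mem_convexHull_range_iff {Ω : Type*} [Fintype Ω] (v : Ω → V) (x : V) :
    x ∈ convexHull ℝ (Set.range v) ↔
      ∃ Q : Ω → ℝ, (∀ ω, 0 ≤ Q ω) ∧ ∑ ω, Q ω = 1 ∧ ∑ ω, Q ω • v ω = x := by
  classical
  constructor
  · intro hx
    rw [convexHull_range_eq_exists_affineCombination] at hx
    obtain ⟨s, w, hw0, hw1, hx⟩ := hx
    rw [affineCombination_eq_linear_combination s v w hw1] at hx
    refine ⟨fun ω => if ω ∈ s then w ω else 0, fun ω => ?_, ?_, ?_⟩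
    · by_cases h : ω ∈ s <;> simp [h, hw0 ω]
    · simp only [Finset.sum_ite_mem, Finset.univ_inter]; exact hw1
    · rw [← hx]
      simp only [ite_smul, zero_smul, Finset.sum_ite_mem, Finset.univ_inter]
  · rintro ⟨Q, hQ0, hQ1, rfl⟩
    rw [← Finset.centerMass_eq_of_sum_1 _ v hQ1]
    exact Finset.centerMass_mem_convexHull _ (fun ω _ => hQ0 ω) (by rw [hQ1]; norm_num)
      (fun ω _ => Set.mem_range_self ω)

set_option maxHeartbeats 1000000 in
lemma mem_intrinsicInterior_iff_pos_combo {Ω : Type*} [Fintype Ω] [Nonempty Ω]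
    [FiniteDimensional ℝ V] (v : Ω → V) (x : V) :
    x ∈ intrinsicInterior ℝ (convexHull ℝ (Set.range v)) ↔
      ∃ Q : Ω → ℝ, (∀ ω, 0 < Q ω) ∧ ∑ ω, Q ω = 1 ∧ ∑ ω, Q ω • v ω = x := by
  classical
  set s : Set V := convexHull ℝ (Set.range v) with hs
  set n : ℕ := Fintype.card Ω with hn
  have hnpos : 0 < (n : ℝ) := by
    have := Fintype.card_pos (α := Ω); exact_mod_cast this
  set b : V := ∑ ω, (n : ℝ)⁻¹ • v ω with hbdef
  have hbsum : ∑ ω : Ω, (n : ℝ)⁻¹ = 1 := by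
    rw [Finset.sum_const, Finset.card_univ, nsmul_eq_mul, ← hn, mul_inv_cancel₀ hnpos.ne']
  have hb : b ∈ s := (mem_convexHull_range_iff v b).2
    ⟨fun _ => (n : ℝ)⁻¹, fun _ => by positivity, hbsum, rfl⟩
  constructor
  · rintro ⟨x', hx', rfl⟩
    obtain ⟨ε, hε, hball⟩ := Metric.mem_nhds_iff.1 (mem_interior_iff_mem_nhds.1 hx')
    set xv : V := (x' : V) with hxv
    set δ : ℝ := ε / (2 * (‖xv - b‖ + 1)) with hδdef
    have hδ : 0 < δ := by positivity
    have hδd : δ * ‖xv - b‖ < ε := by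
      rw [hδdef, div_mul_eq_mul_div, div_lt_iff₀ (by positivity)]
      nlinarith [norm_nonneg (xv - b)]
    have hbW : b ∈ affineSpan ℝ s := subset_affineSpan ℝ s hb
    have hxW : xv ∈ affineSpan ℝ s := x'.2
    have hzW : δ • (xv - b) + xv ∈ affineSpan ℝ s := by
      have h1 : xv -ᵥ b ∈ (affineSpan ℝ s).direction :=
        AffineSubspace.vsub_mem_direction hxW hbW
      have h2 : δ • (xv - b) ∈ (affineSpan ℝ s).direction := by
        rw [vsub_eq_sub] at h1; exact Submodule.smul_mem _ _ h1
      have := AffineSubspace.vadd_mem_of_mem_direction h2 hxW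
      rwa [vadd_eq_add] at this
    have hz : δ • (xv - b) + xv ∈ s := by
      have : (⟨δ • (xv - b) + xv, hzW⟩ : affineSpan ℝ s) ∈ Metric.ball x' ε := by
        rw [Metric.mem_ball, Subtype.dist_eq, dist_eq_norm]
        show ‖δ • (xv - b) + xv - xv‖ < ε
        simpa [norm_smul, abs_of_pos hδ] using hδd
      exact hball this
    obtain ⟨lam, hl0, hl1, hlz⟩ := (mem_convexHull_range_iff v _).1 hz
    have h1δ : (0:ℝ) < 1 + δ := by linarith
    refine ⟨fun ω => (lam ω + δ / n) / (1 + δ),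
      fun ω => div_pos (add_pos_of_nonneg_of_pos (hl0 ω) (div_pos hδ hnpos)) h1δ, ?_, ?_⟩
    · rw [← Finset.sum_div, Finset.sum_add_distrib, hl1, Finset.sum_const,
        Finset.card_univ, ← hn, nsmul_eq_mul]
      field_simp
    · have expand : ∀ ω, ((lam ω + δ / n) / (1 + δ)) • v ω
          = (1 + δ)⁻¹ • (lam ω • v ω + δ • ((n:ℝ)⁻¹ • v ω)) := by
        intro ω
        have h1 : δ / (n:ℝ) = (n:ℝ)⁻¹ * δ := by rw [div_eq_mul_inv, mul_comm]
        rw [h1, div_eq_inv_mul]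
        module
      simp_rw [expand]
      rw [← Finset.smul_sum, Finset.sum_add_distrib, hlz, ← Finset.smul_sum, ← hbdef]
      rw [inv_smul_eq_iff₀ h1δ.ne']
      module
  · rintro ⟨Q, hQ0, hQ1, hQx⟩
    have hxs : x ∈ s := (mem_convexHull_range_iff v x).2 ⟨Q, fun ω => (hQ0 ω).le, hQ1, hQx⟩
    have hxW : x ∈ affineSpan ℝ s := subset_affineSpan ℝ s hxs
    set ω₀ : Ω := Classical.arbitrary Ω with hω₀
    set D : Submodule ℝ V := Submodule.span ℝ (Set.range fun ω => v ω - v ω₀) with hD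
    have hdir : (affineSpan ℝ s).direction = D := by
      rw [hs, affineSpan_convexHull, direction_affineSpan,
        vectorSpan_range_eq_span_range_vsub_right ℝ v ω₀, hD]
      simp only [vsub_eq_sub]
    set T : (Ω → ℝ) →ₗ[ℝ] V :=
      Fintype.linearCombination ℝ (fun ω => v ω - v ω₀) with hT
    have hTapp : ∀ c : Ω → ℝ, T c = ∑ ω, c ω • (v ω - v ω₀) :=
      fun c => Fintype.linearCombination_apply ℝ _ c
    have hTD : ∀ c, T c ∈ D := fun c => by
      rw [hTapp]
      exact Submodule.sum_mem _
        (fun ω _ => Submodule.smul_mem _ _ (Submodule.subset_span ⟨ω, rfl⟩))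
    set T' : (Ω → ℝ) →ₗ[ℝ] D := T.codRestrict D hTD with hT'
    have hrange : D ≤ LinearMap.range T := by
      rw [hD, Submodule.span_le]
      rintro _ ⟨ω, rfl⟩
      refine ⟨Pi.single ω 1, ?_⟩
      rw [hTapp]
      simp [Pi.single_apply, ite_smul]
    have hT'surj : Function.Surjective T' := fun u => by
      obtain ⟨c, hc⟩ := hrange u.2
      exact ⟨c, Subtype.ext hc⟩
    obtain ⟨r, hr⟩ := T'.exists_rightInverse_of_surjective (LinearMap.range_eq_top.2 hT'surj)
    set rc : D →L[ℝ] (Ω → ℝ) := LinearMap.toContinuousLinearMap r with hrc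
    set K : ℝ := ‖rc‖ + 1 with hK
    have hKpos : 0 < K := by positivity
    have hKb : ∀ u : D, ‖r u‖ ≤ K * ‖u‖ := fun u => by
      calc ‖r u‖ = ‖rc u‖ := rfl
        _ ≤ ‖rc‖ * ‖u‖ := rc.le_opNorm u
        _ ≤ K * ‖u‖ := by nlinarith [norm_nonneg u]
    set m : ℝ := Finset.univ.inf' Finset.univ_nonempty Q with hm
    have hmpos : 0 < m := by
      rw [hm, Finset.lt_inf'_iff]
      exact fun ω _ => hQ0 ω
    have hmQ : ∀ ω, m ≤ Q ω := fun ω => Finset.inf'_le _ (Finset.mem_univ ω)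
    set ε : ℝ := m / ((n + 1) * K) with hε
    have hεpos : 0 < ε := by positivity
    refine ⟨⟨x, hxW⟩, ?_, rfl⟩
    rw [mem_interior_iff_mem_nhds, Metric.mem_nhds_iff]
    refine ⟨ε, hεpos, ?_⟩
    rintro ⟨y, hyW⟩ hy
    rw [Metric.mem_ball, Subtype.dist_eq, dist_eq_norm] at hy
    have huD : y - x ∈ D := by
      have := AffineSubspace.vsub_mem_direction hyW hxW
      rwa [vsub_eq_sub, hdir] at this
    set u : D := ⟨y - x, huD⟩ with hu
    set c : Ω → ℝ := r u with hc
    have hTc : T c = y - x := by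
      have h1 := LinearMap.congr_fun hr u
      simp only [LinearMap.comp_apply, LinearMap.id_apply] at h1
      exact congrArg Subtype.val h1
    have hcn : ‖c‖ < m / (n + 1) := by
      calc ‖c‖ ≤ K * ‖u‖ := hKb u
        _ < K * ε := by
            apply mul_lt_mul_of_pos_left _ hKpos
            simpa using hy
        _ = m / (n + 1) := by
            rw [hε]; field_simp
    have hcoord : ∀ ω, |c ω| ≤ ‖c‖ := fun ω => by
      simpa [Real.norm_eq_abs] using norm_le_pi_norm c ω
    have hsumc : |∑ ω, c ω| ≤ n * ‖c‖ := by
      calc |∑ ω, c ω| ≤ ∑ ω, |c ω| := Finset.abs_sum_le_sum_abs _ _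
        _ ≤ ∑ _ω : Ω, ‖c‖ := Finset.sum_le_sum (fun ω _ => hcoord ω)
        _ = n * ‖c‖ := by rw [Finset.sum_const, Finset.card_univ, nsmul_eq_mul]
    have hcnm : (n + 1) * ‖c‖ < m := by
      rw [lt_div_iff₀ (by positivity)] at hcn
      linarith [hcn]
    set Q' : Ω → ℝ := fun ω => Q ω + c ω - (if ω = ω₀ then ∑ ω', c ω' else 0) with hQ'
    have hQ'0 : ∀ ω, 0 ≤ Q' ω := by
      intro ω
      have h1 := hcoord ω
      have h2 := hmQ ω
      have h3 := abs_le.1 h1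
      have hcnn : 0 ≤ ‖c‖ := norm_nonneg c
      have h4 := abs_le.1 hsumc
      have h5 : (0:ℝ) ≤ (n:ℝ) * ‖c‖ := mul_nonneg hnpos.le hcnn
      rw [hQ']
      by_cases h : ω = ω₀
      · subst h
        simp only [if_true]
        linarith [h3.1]
      · simp only [h, if_false]
        linarith [h3.1]
    have hQ'1 : ∑ ω, Q' ω = 1 := by
      simp only [hQ']
      rw [Finset.sum_sub_distrib, Finset.sum_add_distrib, hQ1,
        Finset.sum_ite_eq', if_pos (Finset.mem_univ ω₀)]
      ring
    have hQ'x : ∑ ω, Q' ω • v ω = y := by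
      simp only [hQ', sub_smul, add_smul, ite_smul, zero_smul]
      rw [Finset.sum_sub_distrib, Finset.sum_add_distrib, hQx,
        Finset.sum_ite_eq', if_pos (Finset.mem_univ ω₀)]
      have : T c = ∑ ω, c ω • v ω - (∑ ω, c ω) • v ω₀ := by
        rw [hTapp]
        simp only [smul_sub]
        rw [Finset.sum_sub_distrib, ← Finset.sum_smul]
      rw [hTc] at this
      have h5 : ∑ ω, c ω • v ω - (∑ ω, c ω) • v ω₀ = y - x := this.symm
      linear_combination (norm := module) h5
    exact (mem_convexHull_range_iff v y).2 ⟨Q', hQ'0, hQ'1, hQ'x⟩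

lemma sum_smul_prod' {Ω : Type*} [Fintype Ω] {W : Type*} [NormedAddCommGroup W]
    [NormedSpace ℝ W] (Q : Ω → ℝ) (S : Ω → W) (f : Ω → ℝ) :
    ∑ ω, Q ω • ((S ω, f ω) : W × ℝ) = (∑ ω, Q ω • S ω, ∑ ω, Q ω * f ω) := by
  refine Prod.ext ?_ ?_
  · rw [Prod.fst_sum]; simp [Prod.smul_mk]
  · rw [Prod.snd_sum]; simp [Prod.smul_mk, smul_eq_mul]


/-- one-period duality for the lower price, the inequality π̲ ≤ π̄, and
the identification of the set of arbitrage-free prices of f with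
{y : (S_0, y) ∈ ri(conv{(S_1(ω), f(ω))})}. -/
theorem one_period_lower_price {Ω : Type} [Fintype Ω] [Nonempty Ω] {d : ℕ}
    (P : Ω → ℝ) (hP : ∀ ω, 0 < P ω) (hP1 : ∑ ω, P ω = 1)
    (S₀ : E d) (S₁ : Ω → E d)
    (hNA : S₀ ∈ intrinsicInterior ℝ (convexHull ℝ (Set.range S₁)))
    (f : Ω → ℝ) :
    sSup {x : ℝ | ∃ γ : E d, ∀ ω, x - ⟪γ, S₁ ω - S₀⟫ ≤ f ω} =
      sInf {y : ℝ | (S₀, y) ∈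
        intrinsicInterior ℝ (convexHull ℝ (Set.range fun ω => (S₁ ω, f ω)))} ∧
    sSup {x : ℝ | ∃ γ : E d, ∀ ω, x - ⟪γ, S₁ ω - S₀⟫ ≤ f ω} ≤
      sInf {x : ℝ | ∃ γ : E d, ∀ ω, f ω ≤ x + ⟪γ, S₁ ω - S₀⟫} ∧
    {y : ℝ | ∃ Q : Ω → ℝ, (∀ ω, 0 < Q ω) ∧ (∑ ω, Q ω = 1) ∧
        (∑ ω, Q ω • S₁ ω = S₀) ∧ ∑ ω, Q ω * f ω = y} =
      {y : ℝ | (S₀, y) ∈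
        intrinsicInterior ℝ (convexHull ℝ (Set.range fun ω => (S₁ ω, f ω)))} := by
  classical
  have hA_iff : ∀ y : ℝ, ((S₀, y) ∈
      intrinsicInterior ℝ (convexHull ℝ (Set.range fun ω => ((S₁ ω, f ω) : E d × ℝ)))) ↔
      ∃ Q : Ω → ℝ, (∀ ω, 0 < Q ω) ∧ (∑ ω, Q ω = 1) ∧
        (∑ ω, Q ω • S₁ ω = S₀) ∧ ∑ ω, Q ω * f ω = y := by
    intro y
    rw [mem_intrinsicInterior_iff_pos_combo (fun ω => ((S₁ ω, f ω) : E d × ℝ))]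
    constructor
    · rintro ⟨Q, hQ0, hQ1, hQx⟩
      rw [sum_smul_prod', Prod.mk.injEq] at hQx
      exact ⟨Q, hQ0, hQ1, hQx.1, hQx.2⟩
    · rintro ⟨Q, hQ0, hQ1, hQS, hQf⟩
      exact ⟨Q, hQ0, hQ1, by rw [sum_smul_prod', hQS, hQf]⟩
  set A : Set ℝ := {y : ℝ | (S₀, y) ∈
      intrinsicInterior ℝ (convexHull ℝ (Set.range fun ω => ((S₁ ω, f ω) : E d × ℝ)))} with hA
  set SL : Set ℝ := {x : ℝ | ∃ γ : E d, ∀ ω, x - ⟪γ, S₁ ω - S₀⟫ ≤ f ω} with hSL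
  set SU : Set ℝ := {x : ℝ | ∃ γ : E d, ∀ ω, f ω ≤ x + ⟪γ, S₁ ω - S₀⟫} with hSU
  -- the measure from hNA
  obtain ⟨Qn, hQn0, hQn1, hQnS⟩ := (mem_intrinsicInterior_iff_pos_combo S₁ S₀).1 hNA
  set y₀ : ℝ := ∑ ω, Qn ω * f ω with hy₀def
  have hy₀ : y₀ ∈ A := (hA_iff y₀).2 ⟨Qn, hQn0, hQn1, hQnS, rfl⟩
  -- key cancellation
  have key : ∀ (R : Ω → ℝ), (∑ ω, R ω = 1) → (∑ ω, R ω • S₁ ω = S₀) →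
      ∀ γ : E d, ∑ ω, R ω * ⟪γ, S₁ ω - S₀⟫ = 0 := by
    intro R hR1 hRS γ
    have h1 : ∑ ω, R ω * ⟪γ, S₁ ω - S₀⟫ = ⟪γ, ∑ ω, R ω • (S₁ ω - S₀)⟫ := by
      rw [inner_sum]
      exact Finset.sum_congr rfl fun ω _ => (real_inner_smul_right γ _ (R ω)).symm
    rw [h1]
    have h2 : ∑ ω, R ω • (S₁ ω - S₀) = 0 := by
      simp_rw [smul_sub]
      rw [Finset.sum_sub_distrib, hRS, ← Finset.sum_smul, hR1, one_smul, sub_self]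
    rw [h2, inner_zero_right]
  have K1 : ∀ x ∈ SL, ∀ y ∈ A, x ≤ y := by
    rintro x ⟨γ, hγ⟩ y hy
    obtain ⟨R, hR0, hR1, hRS, hRf⟩ := (hA_iff y).1 hy
    have h1 : ∑ ω, R ω * (x - ⟪γ, S₁ ω - S₀⟫) ≤ ∑ ω, R ω * f ω :=
      Finset.sum_le_sum fun ω _ => mul_le_mul_of_nonneg_left (hγ ω) (hR0 ω).le
    rw [hRf] at h1
    calc x = ∑ ω, R ω * (x - ⟪γ, S₁ ω - S₀⟫) := by
          simp_rw [mul_sub]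
          rw [Finset.sum_sub_distrib, key R hR1 hRS γ, ← Finset.sum_mul, hR1, one_mul, sub_zero]
      _ ≤ y := h1
  have K2 : ∀ y ∈ A, ∀ x ∈ SU, y ≤ x := by
    rintro y hy x ⟨γ, hγ⟩
    obtain ⟨R, hR0, hR1, hRS, hRf⟩ := (hA_iff y).1 hy
    have h1 : ∑ ω, R ω * f ω ≤ ∑ ω, R ω * (x + ⟪γ, S₁ ω - S₀⟫) :=
      Finset.sum_le_sum fun ω _ => mul_le_mul_of_nonneg_left (hγ ω) (hR0 ω).le
    rw [hRf] at h1
    calc y ≤ ∑ ω, R ω * (x + ⟪γ, S₁ ω - S₀⟫) := h1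
      _ = x := by
          simp_rw [mul_add]
          rw [Finset.sum_add_distrib, key R hR1 hRS γ, ← Finset.sum_mul, hR1, one_mul, add_zero]
  have hSLne : SL.Nonempty := by
    refine ⟨Finset.univ.inf' Finset.univ_nonempty f, 0, fun ω => ?_⟩
    rw [inner_zero_left, sub_zero]
    exact Finset.inf'_le f (Finset.mem_univ ω)
  have hSUne : SU.Nonempty := by
    refine ⟨Finset.univ.sup' Finset.univ_nonempty f, 0, fun ω => ?_⟩
    rw [inner_zero_left, add_zero]
    exact Finset.le_sup' f (Finset.mem_univ ω)
  have hAne : A.Nonempty := ⟨y₀, hy₀⟩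
  have hSLbdd : BddAbove SL := ⟨y₀, fun x hx => K1 x hx y₀ hy₀⟩
  obtain ⟨x₀, hx₀⟩ := id hSLne
  have hAbdd : BddBelow A := ⟨x₀, fun y hy => K1 x₀ hx₀ y hy⟩
  -- the subhedging fact
  have hsub : ∀ y : ℝ, y < sInf A → y ∈ SL := by
    intro y hy
    have hynotC : ((S₀, y) : E d × ℝ) ∉
        convexHull ℝ (Set.range fun ω => ((S₁ ω, f ω) : E d × ℝ)) := by
      intro hmem
      obtain ⟨lam, hl0, hl1, hlx⟩ := (mem_convexHull_range_iff _ _).1 hmem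
      rw [sum_smul_prod', Prod.mk.injEq] at hlx
      have hle : sInf A ≤ y := by
        by_contra hcon
        push_neg at hcon
        set t : ℝ := (sInf A - y) / 2 with ht
        have htpos : 0 < t := by rw [ht]; linarith
        set θ : ℝ := min 1 (t / (|y₀ - y| + 1)) with hθ
        have hθ0 : 0 < θ := lt_min one_pos (by positivity)
        have hθ1 : θ ≤ 1 := min_le_left _ _
        have hmixA : ((1 - θ) * y + θ * y₀) ∈ A := by
          refine (hA_iff _).2 ⟨fun ω => (1 - θ) * lam ω + θ * Qn ω, fun ω =>
            add_pos_of_nonneg_of_pos (mul_nonneg (by linarith) (hl0 ω))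
              (mul_pos hθ0 (hQn0 ω)), ?_, ?_, ?_⟩
          · rw [Finset.sum_add_distrib, ← Finset.mul_sum, ← Finset.mul_sum, hl1, hQn1]
            ring
          · simp_rw [add_smul, mul_smul]
            rw [Finset.sum_add_distrib, ← Finset.smul_sum, ← Finset.smul_sum, hlx.1, hQnS,
              ← add_smul]
            rw [sub_add_cancel, one_smul]
          · simp_rw [add_mul, mul_assoc]
            rw [Finset.sum_add_distrib, ← Finset.mul_sum, ← Finset.mul_sum, hlx.2, ← hy₀def]
        have h1 : sInf A ≤ (1 - θ) * y + θ * y₀ := csInf_le hAbdd hmixA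
        have h2 : θ * (y₀ - y) ≤ t := by
          have ha : θ * (y₀ - y) ≤ θ * |y₀ - y| :=
            mul_le_mul_of_nonneg_left (le_abs_self _) hθ0.le
          have hb : θ * |y₀ - y| ≤ t / (|y₀ - y| + 1) * |y₀ - y| :=
            mul_le_mul_of_nonneg_right (min_le_right _ _) (abs_nonneg _)
          have hcle : t / (|y₀ - y| + 1) * |y₀ - y| ≤ t := by
            rw [div_mul_eq_mul_div, div_le_iff₀ (by positivity)]
            nlinarith [abs_nonneg (y₀ - y)]
          linarith
        have : (1 - θ) * y + θ * y₀ = y + θ * (y₀ - y) := by ring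
        rw [this] at h1
        rw [ht] at h2
        linarith
      linarith
    have hC : IsClosed (convexHull ℝ (Set.range fun ω => ((S₁ ω, f ω) : E d × ℝ))) :=
      ((Set.finite_range _).isCompact_convexHull ℝ).isClosed
    obtain ⟨φ, u, hφlt, huφ⟩ :=
      geometric_hahn_banach_closed_point (convex_convexHull ℝ _) hC hynotC
    set c : ℝ := φ ((0 : E d), (1 : ℝ)) with hcdef
    set ψ : E d →L[ℝ] ℝ := φ.comp (ContinuousLinearMap.inl ℝ (E d) ℝ) with hψdef
    have hφsplit : ∀ (a : E d) (t : ℝ), φ (a, t) = ψ a + t * c := by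
      intro a t
      have h1 : ((a, t) : E d × ℝ) = (a, 0) + t • ((0 : E d), (1 : ℝ)) := by
        simp [Prod.ext_iff]
      rw [h1, map_add, map_smul, smul_eq_mul]
      rfl
    have hsep : ∀ ω, ψ (S₁ ω) + f ω * c < ψ S₀ + y * c := by
      intro ω
      have h1 : φ ((S₁ ω, f ω) : E d × ℝ) < u :=
        hφlt _ (subset_convexHull ℝ _ (Set.mem_range_self ω))
      have h2 : u < φ ((S₀, y) : E d × ℝ) := huφ
      rw [hφsplit] at h1 h2
      linarith
    rcases lt_trichotomy c 0 with hc | hc | hc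
    · -- c < 0 : construct the subhedge
      set w : E d := (InnerProductSpace.toDual ℝ (E d)).symm ψ with hw
      have hwψ : ∀ a : E d, ⟪w, a⟫ = ψ a := fun a => InnerProductSpace.toDual_symm_apply
      refine ⟨c⁻¹ • w, fun ω => ?_⟩
      have h1 : ⟪c⁻¹ • w, S₁ ω - S₀⟫ = c⁻¹ * (ψ (S₁ ω) - ψ S₀) := by
        rw [real_inner_smul_left, hwψ, map_sub]
      rw [h1]
      have h2 := hsep ω
      have hcinv : c⁻¹ < 0 := inv_lt_zero.2 hc
      have h3 : ψ (S₁ ω) - ψ S₀ < c * (y - f ω) := by linarith [hsep ω]; 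
      have h4 : c⁻¹ * (c * (y - f ω)) < c⁻¹ * (ψ (S₁ ω) - ψ S₀) :=
        mul_lt_mul_of_neg_left h3 hcinv
      have h5 : c⁻¹ * (c * (y - f ω)) = y - f ω := by
        rw [← mul_assoc, inv_mul_cancel₀ hc.ne, one_mul]
      linarith
    · -- c = 0 : contradiction with hNA
      exfalso
      have hstrict : ∑ ω, Qn ω * ψ (S₁ ω) < ∑ ω, Qn ω * ψ S₀ := by
        refine Finset.sum_lt_sum_of_nonempty Finset.univ_nonempty fun ω _ => ?_
        refine mul_lt_mul_of_pos_left ?_ (hQn0 ω)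
        have := hsep ω
        rw [hc, mul_zero, mul_zero, add_zero, add_zero] at this
        exact this
      have hL : ∑ ω, Qn ω * ψ (S₁ ω) = ψ S₀ := by
        rw [← hQnS, map_sum]
        exact Finset.sum_congr rfl fun ω _ => by rw [map_smul, smul_eq_mul]
      have hR : ∑ ω, Qn ω * ψ S₀ = ψ S₀ := by
        rw [← Finset.sum_mul, hQn1, one_mul]
      rw [hL, hR] at hstrict
      exact lt_irrefl _ hstrict
    · -- c > 0 : contradiction with y < sInf A ≤ y₀
      exfalso
      have hstrict : ∑ ω, Qn ω * (ψ (S₁ ω) + f ω * c) < ∑ ω, Qn ω * (ψ S₀ + y * c) := by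
        refine Finset.sum_lt_sum_of_nonempty Finset.univ_nonempty fun ω _ =>
          mul_lt_mul_of_pos_left (hsep ω) (hQn0 ω)
      have hL : ∑ ω, Qn ω * (ψ (S₁ ω) + f ω * c) = ψ S₀ + y₀ * c := by
        simp_rw [mul_add]
        rw [Finset.sum_add_distrib]
        have h1 : ∑ ω, Qn ω * ψ (S₁ ω) = ψ S₀ := by
          rw [← hQnS, map_sum]
          exact Finset.sum_congr rfl fun ω _ => by rw [map_smul, smul_eq_mul]
        have h2 : ∑ ω, Qn ω * (f ω * c) = y₀ * c := by
          simp_rw [← mul_assoc]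
          rw [← Finset.sum_mul, ← hy₀def]
        rw [h1, h2]
      have hR : ∑ ω, Qn ω * (ψ S₀ + y * c) = ψ S₀ + y * c := by
        rw [← Finset.sum_mul, hQn1, one_mul]
      rw [hL, hR] at hstrict
      have hy₀y : y₀ < y := by
        have := lt_of_mul_lt_mul_right (by linarith : y₀ * c < y * c) hc.le
        exact this
      have : sInf A ≤ y₀ := csInf_le hAbdd hy₀
      linarith
  refine ⟨?_, ?_, ?_⟩
  · refine le_antisymm ?_ ?_
    · exact le_csInf hAne fun y hy => csSup_le hSLne fun x hx => K1 x hx y hy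
    · by_contra hcon
      push_neg at hcon
      set y : ℝ := (sSup SL + sInf A) / 2 with hy
      have h1 : y < sInf A := by rw [hy]; linarith
      have h2 : sSup SL < y := by rw [hy]; linarith
      have h3 := le_csSup hSLbdd (hsub y h1)
      linarith
  · calc sSup SL ≤ y₀ := csSup_le hSLne fun x hx => K1 x hx y₀ hy₀
      _ ≤ sInf SU := le_csInf hSUne fun x hx => K2 y₀ hy₀ x hx
  · ext y
    exact (hA_iff y).symm
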